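/- Let t⁰, t¹ ∈ (0,∞)^V be such that K_{t⁰} and K_{t⁰+t¹} are invertible, and set W̃ = W K_{t⁰}^{-1} and H̃_{1/(2t¹)} = diag(1/t¹) − W̃. Then (H̃_{1/(2t¹)})^{-1} = diag(t⁰) H_{1/(2t⁰)} (H_{1/(2(t⁰+t¹))})^{-1} H_{1/(2t⁰)} diag(t⁰) − diag(t⁰) H_{1/(2t⁰)} diag(t⁰). -/

import Mathlib

open Matrix

/-- The matrix `K_t = Id - diag(t) W`. -/
noncomputable def Kmat {V : Type*} [Fintype V] [DecidableEq V]
    (W : Matrix V V ℝ) (t : V → ℝ) : Matrix V V ℝ :=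
  1 - Matrix.diagonal t * W

/-- With `W̃ = W K_{t⁰}⁻¹` and `H̃_{1/(2t¹)} = diag(1/t¹) - W̃`, one has
`H̃_{1/(2t¹)}⁻¹ = diag(t⁰) H_{1/(2t⁰)} H_{1/(2(t⁰+t¹))}⁻¹ H_{1/(2t⁰)} diag(t⁰)
  - diag(t⁰) H_{1/(2t⁰)} diag(t⁰)`. -/
theorem H_tilde_inverse_formula (N : ℕ) (W : Matrix (Fin N) (Fin N) ℝ)
    (hWsymm : W.IsSymm) (hWnonneg : ∀ i j, 0 ≤ W i j)
    (t₀ t₁ : Fin N → ℝ) (ht₀ : ∀ i, 0 < t₀ i) (ht₁ : ∀ i, 0 < t₁ i)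
    (hK₀ : IsUnit (Kmat W t₀)) (hK : IsUnit (Kmat W (t₀ + t₁))) :
    (Matrix.diagonal (fun i => 1 / t₁ i) - W * (Kmat W t₀)⁻¹)⁻¹ =
      Matrix.diagonal t₀ * (Matrix.diagonal (fun i => 1 / t₀ i) - W) *
          (Matrix.diagonal (fun i => 1 / (t₀ i + t₁ i)) - W)⁻¹ *
          (Matrix.diagonal (fun i => 1 / t₀ i) - W) * Matrix.diagonal t₀ -
        Matrix.diagonal t₀ * (Matrix.diagonal (fun i => 1 / t₀ i) - W) *
          Matrix.diagonal t₀ := by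
  have ht₀' : ∀ i, t₀ i ≠ 0 := fun i => (ht₀ i).ne'
  have ht₁' : ∀ i, t₁ i ≠ 0 := fun i => (ht₁ i).ne'
  have hts : ∀ i, t₀ i + t₁ i ≠ 0 := fun i => (add_pos (ht₀ i) (ht₁ i)).ne'
  set D₀ : Matrix (Fin N) (Fin N) ℝ := Matrix.diagonal t₀ with hD₀def
  set H₀ : Matrix (Fin N) (Fin N) ℝ := Matrix.diagonal (fun i => 1 / t₀ i) - W with hH₀def
  set H : Matrix (Fin N) (Fin N) ℝ := Matrix.diagonal (fun i => 1 / (t₀ i + t₁ i)) - W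
    with hHdef
  set D : Matrix (Fin N) (Fin N) ℝ := Matrix.diagonal (fun i => t₀ i + t₁ i) with hDdef
  -- diagonal cancellations
  have hone₀ : Matrix.diagonal t₀ * Matrix.diagonal (fun i => 1 / t₀ i) = 1 := by
    have h : (fun i => t₀ i * (1 / t₀ i)) = (1 : Fin N → ℝ) := by
      funext i; simp only [Pi.one_apply, mul_one_div]; exact div_self (ht₀' i)
    rw [diagonal_mul_diagonal, h]; exact Matrix.diagonal_one
  have hone₁ : Matrix.diagonal (fun i => 1 / t₁ i) * Matrix.diagonal t₁ = 1 := by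
    have h : (fun i => (1 / t₁ i) * t₁ i) = (1 : Fin N → ℝ) := by
      funext i; simp only [Pi.one_apply, one_div]; exact inv_mul_cancel₀ (ht₁' i)
    rw [diagonal_mul_diagonal, h]; exact Matrix.diagonal_one
  have honeD : D * Matrix.diagonal (fun i => 1 / (t₀ i + t₁ i)) = 1 := by
    have h : (fun i => (t₀ i + t₁ i) * (1 / (t₀ i + t₁ i))) = (1 : Fin N → ℝ) := by
      funext i; simp only [Pi.one_apply, mul_one_div]; exact div_self (hts i)
    rw [hDdef, diagonal_mul_diagonal, h]; exact Matrix.diagonal_one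
  -- factorizations
  have hfac₀ : D₀ * H₀ = Kmat W t₀ := by
    rw [hD₀def, hH₀def, Kmat, mul_sub, hone₀]
  have hfac : D * H = Kmat W (t₀ + t₁) := by
    rw [hHdef, mul_sub, honeD, Kmat]
    rfl
  -- det units
  have hK₀d : IsUnit (Kmat W t₀).det := (Matrix.isUnit_iff_isUnit_det _).mp hK₀
  have hKd : IsUnit (Kmat W (t₀ + t₁)).det := (Matrix.isUnit_iff_isUnit_det _).mp hK
  have hHd : IsUnit H.det := by
    have : IsUnit (D.det * H.det) := by rw [← Matrix.det_mul, hfac]; exact hKd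
    exact isUnit_of_mul_isUnit_right this
  have hDinv : D⁻¹ = Matrix.diagonal (fun i => 1 / (t₀ i + t₁ i)) :=
    Matrix.inv_eq_right_inv honeD
  have hKinv : (Kmat W (t₀ + t₁))⁻¹ = H⁻¹ * Matrix.diagonal (fun i => 1 / (t₀ i + t₁ i)) := by
    rw [← hfac, Matrix.mul_inv_rev, hDinv]
  -- step A : the matrix to invert equals diag(1/t₁) * K * K₀⁻¹
  have hd : Matrix.diagonal (t₀ + t₁) = Matrix.diagonal t₀ + Matrix.diagonal t₁ := by
    rw [Matrix.diagonal_add]; rfl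
  have hsub : Kmat W t₀ - Kmat W (t₀ + t₁) = Matrix.diagonal t₁ * W := by
    simp only [Kmat]
    rw [hd, add_mul]
    abel
  have h1 : Matrix.diagonal (fun i => 1 / t₁ i) * Kmat W (t₀ + t₁) =
      Matrix.diagonal (fun i => 1 / t₁ i) * Kmat W t₀ - W := by
    have h2 : Matrix.diagonal (fun i => 1 / t₁ i) * Kmat W t₀ -
        Matrix.diagonal (fun i => 1 / t₁ i) * Kmat W (t₀ + t₁) = W := by
      rw [← mul_sub, hsub, ← mul_assoc, hone₁, one_mul]
    calc Matrix.diagonal (fun i => 1 / t₁ i) * Kmat W (t₀ + t₁)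
        = Matrix.diagonal (fun i => 1 / t₁ i) * Kmat W t₀ -
            (Matrix.diagonal (fun i => 1 / t₁ i) * Kmat W t₀ -
              Matrix.diagonal (fun i => 1 / t₁ i) * Kmat W (t₀ + t₁)) := by abel
      _ = Matrix.diagonal (fun i => 1 / t₁ i) * Kmat W t₀ - W := by rw [h2]
  have hA : Matrix.diagonal (fun i => 1 / t₁ i) - W * (Kmat W t₀)⁻¹ =
      Matrix.diagonal (fun i => 1 / t₁ i) * Kmat W (t₀ + t₁) * (Kmat W t₀)⁻¹ := by
    rw [h1, sub_mul, mul_assoc, Matrix.mul_nonsing_inv _ hK₀d, mul_one]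
  -- step B : the claimed right-hand side equals K₀ * K⁻¹ * diag t₁
  have hdiff : H₀ * D₀ - H * D₀ =
      Matrix.diagonal (fun i => 1 / (t₀ i + t₁ i)) * Matrix.diagonal t₁ := by
    have hfun : (fun i => 1 / t₀ i * t₀ i - 1 / (t₀ i + t₁ i) * t₀ i)
        = (fun i => 1 / (t₀ i + t₁ i) * t₁ i) := by
      funext i
      have h1' := ht₀' i
      have h2' := hts i
      field_simp
      ring
    rw [hH₀def, hHdef, hD₀def, sub_mul, sub_mul, sub_sub_sub_cancel_right,
      diagonal_mul_diagonal, diagonal_mul_diagonal, diagonal_mul_diagonal,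
      Matrix.diagonal_sub, hfun]
  have hB : D₀ * H₀ * H⁻¹ * H₀ * D₀ - D₀ * H₀ * D₀ =
      Kmat W t₀ * (Kmat W (t₀ + t₁))⁻¹ * Matrix.diagonal t₁ := by
    rw [hKinv, ← hfac₀]
    symm
    calc D₀ * H₀ * (H⁻¹ * Matrix.diagonal (fun i => 1 / (t₀ i + t₁ i))) * Matrix.diagonal t₁
        = D₀ * H₀ * H⁻¹ *
            (Matrix.diagonal (fun i => 1 / (t₀ i + t₁ i)) * Matrix.diagonal t₁) := by
          noncomm_ring
      _ = D₀ * H₀ * H⁻¹ * (H₀ * D₀ - H * D₀) := by rw [hdiff]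
      _ = D₀ * H₀ * H⁻¹ * H₀ * D₀ - D₀ * H₀ * (H⁻¹ * H) * D₀ := by noncomm_ring
      _ = D₀ * H₀ * H⁻¹ * H₀ * D₀ - D₀ * H₀ * D₀ := by
          rw [Matrix.nonsing_inv_mul _ hHd, mul_one]
  rw [hB]
  apply Matrix.inv_eq_right_inv
  rw [hA]
  calc Matrix.diagonal (fun i => 1 / t₁ i) * Kmat W (t₀ + t₁) * (Kmat W t₀)⁻¹ *
        (Kmat W t₀ * (Kmat W (t₀ + t₁))⁻¹ * Matrix.diagonal t₁)
      = Matrix.diagonal (fun i => 1 / t₁ i) *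
          (Kmat W (t₀ + t₁) * ((Kmat W t₀)⁻¹ * Kmat W t₀) * (Kmat W (t₀ + t₁))⁻¹) *
          Matrix.diagonal t₁ := by noncomm_ring
    _ = 1 := by
        rw [Matrix.nonsing_inv_mul _ hK₀d, mul_one, Matrix.mul_nonsing_inv _ hKd,
          mul_one, hone₁]
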